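/- The generating function for k-partitions, counting overlined parts by x, total parts by z, and weight by q, equals (-x z^k q^k; q^k)_∞ / (zq; q)_∞. -/

import Mathlib

noncomputable section

/-- The q-Pochhammer symbol (q^t; q^t)_n as a polynomial in q. -/
def qpoch (t n : ℕ) : Polynomial ℚ :=
  ∏ i ∈ Finset.range n, (1 - Polynomial.X ^ (t * (i + 1)))

/-- The Gaussian binomial coefficient [A choose B] in base q^t:
(q^t;q^t)_A / ((q^t;q^t)_B (q^t;q^t)_{A-B}) when 0 ≤ B ≤ A, and 0 otherwise. -/
def gauss (t : ℕ) (A B : ℤ) : Polynomial ℚ :=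
  if 0 ≤ B ∧ B ≤ A then
    qpoch t A.toNat / (qpoch t B.toNat * qpoch t (A - B).toNat)
  else 0
/-- Formal power series in three variables x/μ = X 0, z/ν = X 1, q = X 2. -/
abbrev S3 := MvPowerSeries (Fin 3) ℚ

/-- Product topology with discrete coefficients, so that infinite sums and
products of power series are meaningful. -/
instance : TopologicalSpace S3 :=
  @Pi.topologicalSpace ((Fin 3) →₀ ℕ) (fun _ => ℚ) (fun _ => ⊥)

/-- Interpret a polynomial in q as a power series in the variable X 2. -/
def pq (p : Polynomial ℚ) : S3 := Polynomial.aeval (MvPowerSeries.X 2 : S3) p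
/-- The number of overlined parts of an overpartition (parts are pairs
(value, overlined?), collected into a multiset). -/
def olCount (π : Multiset (ℕ × Bool)) : ℕ := (π.filter (fun p => p.2 = true)).card

/-- The weight (sum of part values) of an overpartition. -/
def wt (π : Multiset (ℕ × Bool)) : ℕ := (π.map Prod.fst).sum

/-- An overpartition: all parts positive and each value has at most one
overlined occurrence. -/
def IsOverMS (π : Multiset (ℕ × Bool)) : Prop :=
  (∀ p ∈ π, 0 < p.1) ∧ ∀ a : ℕ, π.count (a, true) ≤ 1
/-- A (k,k)-overpartition: an overpartition in which only parts divisible by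
k may be overlined. -/
def IsKKOver (k : ℕ) (π : Multiset (ℕ × Bool)) : Prop :=
  IsOverMS π ∧ ∀ p ∈ π, p.2 = true → k ∣ p.1

/-- A k-partition: a partition in which the k-th occurrence of a part may be
overlined, i.e. each value has at most one overlined occurrence, and a value
with an overlined occurrence occurs at least k times in total. -/
def IsKPart (k : ℕ) (π : Multiset (ℕ × Bool)) : Prop :=
  (∀ p ∈ π, 0 < p.1) ∧
    ∀ a : ℕ, π.count (a, true) ≤ 1 ∧ (π.count (a, true) = 1 → k ≤ π.count (a, false) + 1)

namespace Stmt2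
open MvPowerSeries Finset Filter

abbrev cf (d : Fin 3 →₀ ℕ) (f : S3) : ℚ := coeff d f

def Eqm (m : ℕ) (P Q : S3) : Prop := ∀ d : Fin 3 →₀ ℕ, d 2 ≤ m → cf d P = cf d Q

theorem Eqm.refl {m P} : Eqm m P P := fun _ _ => rfl
theorem Eqm.symm {m P Q} (h : Eqm m P Q) : Eqm m Q P := fun d hd => (h d hd).symm
theorem Eqm.trans {m} {P Q R} (h : Eqm m P Q) (h' : Eqm m Q R) : Eqm m P R :=
  fun d hd => (h d hd).trans (h' d hd)
theorem Eqm.add {m} {P Q P' Q'} (h : Eqm m P Q) (h' : Eqm m P' Q') :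
    Eqm m (P + P') (Q + Q') := by
  intro d hd
  simp only [cf, map_add, h d hd, h' d hd]

theorem Eqm.mul {m} {P Q P' Q'} (h : Eqm m P Q) (h' : Eqm m P' Q') :
    Eqm m (P * P') (Q * Q') := by
  intro d hd
  rw [cf, cf, coeff_mul, coeff_mul]
  apply Finset.sum_congr rfl
  intro p hp
  rw [HasAntidiagonal.mem_antidiagonal] at hp
  have h1 : p.1 2 ≤ m := le_trans (by simp [← hp]) hd
  have h2 : p.2 2 ≤ m := le_trans (by simp [← hp]) hd
  exact congrArg₂ HMul.hMul (h p.1 h1) (h' p.2 h2)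

theorem Eqm.sum {m} {ι} (s : Finset ι) (f g : ι → S3) (h : ∀ i ∈ s, Eqm m (f i) (g i)) :
    Eqm m (∑ i ∈ s, f i) (∑ i ∈ s, g i) := by
  intro d hd
  simp only [cf, map_sum]
  exact Finset.sum_congr rfl fun i hi => h i hi d hd

theorem Eqm.prod {m} {ι} (s : Finset ι) (f g : ι → S3) (h : ∀ i ∈ s, Eqm m (f i) (g i)) :
    Eqm m (∏ i ∈ s, f i) (∏ i ∈ s, g i) := by
  classical
  induction s using Finset.induction with
  | empty => simpa using Eqm.refl
  | @insert a s' hx ih =>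
    rw [Finset.prod_insert hx, Finset.prod_insert hx]
    exact (h a (Finset.mem_insert_self a s')).mul (ih fun i hi => h i (Finset.mem_insert_of_mem hi))

theorem eq_of_forall_eqm {P Q : S3} (h : ∀ m, Eqm m P Q) : P = Q := by
  ext d
  exact h (d 2) d le_rfl

theorem Eqm.mono_deg {m m'} {P Q} (h : Eqm m P Q) (hm : m' ≤ m) : Eqm m' P Q :=
  fun d hd => h d (le_trans hd hm)

theorem eqm_monomial_zero {m : ℕ} {e : Fin 3 →₀ ℕ} {c : ℚ} (he : m < e 2) :
    Eqm m (monomial e c) 0 := by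
  intro d hd
  rw [cf, cf, coeff_monomial, map_zero, if_neg]
  rintro rfl
  omega

theorem eqm_one_add {m : ℕ} {e : Fin 3 →₀ ℕ} {c : ℚ} (he : m < e 2) :
    Eqm m (1 + monomial e c) 1 := by
  have h := (Eqm.refl (m := m) (P := 1)).add (eqm_monomial_zero (c := c) he)
  simpa using h

-- stats and mono
def stats (π : Multiset (ℕ × Bool)) : Fin 3 →₀ ℕ :=
  Finsupp.single 0 (olCount π) + Finsupp.single 1 (Multiset.card π) + Finsupp.single 2 (wt π)

def mono (π : Multiset (ℕ × Bool)) : S3 := monomial (stats π) 1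

theorem olCount_add (π ρ) : olCount (π + ρ) = olCount π + olCount ρ := by
  simp [olCount, Multiset.filter_add]
theorem wt_add (π ρ) : wt (π + ρ) = wt π + wt ρ := by simp [wt]
theorem stats_add (π ρ) : stats (π + ρ) = stats π + stats ρ := by
  simp only [stats, olCount_add, wt_add, Multiset.card_add, Finsupp.single_add]
  abel
theorem mono_add (π ρ) : mono (π + ρ) = mono π * mono ρ := by
  rw [mono, stats_add, mono, mono, monomial_mul_monomial, one_mul]
theorem mono_zero : mono 0 = 1 := by
  have : stats 0 = 0 := by simp [stats, olCount, wt]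
  rw [mono, this]
  simp

theorem stats_apply2 (π) : stats π 2 = wt π := by
  simp [stats, Finsupp.single_apply]
theorem stats_apply1 (π) : stats π 1 = Multiset.card π := by
  simp [stats, Finsupp.single_apply]
theorem stats_apply0 (π) : stats π 0 = olCount π := by
  simp [stats, Finsupp.single_apply]

theorem cf_mono (d) (π) : cf d (mono π) = if d = stats π then 1 else 0 :=
  coeff_monomial d (stats π) 1

theorem eqm_mono_zero {m : ℕ} {π} (h : m < wt π) : Eqm m (mono π) 0 :=
  eqm_monomial_zero (by rwa [stats_apply2])

theorem X_pow (s : Fin 3) (n : ℕ) : (X s : S3) ^ n = monomial (Finsupp.single s n) 1 :=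
  X_pow_eq s n

theorem mono_eq (π) :
    mono π = (X 0 : S3) ^ olCount π * (X 1 : S3) ^ Multiset.card π * (X 2 : S3) ^ wt π := by
  rw [X_pow, X_pow, X_pow, monomial_mul_monomial, monomial_mul_monomial, mono, stats]
  norm_num

-- topology
theorem tendsto_iff_coeff {ι} {F : Filter ι} {f : ι → S3} {g : S3} :
    Tendsto f F (nhds g) ↔ ∀ d, ∀ᶠ i in F, cf d (f i) = cf d g := by
  letI : TopologicalSpace ℚ := ⊥
  haveI : DiscreteTopology ℚ := ⟨rfl⟩
  constructor
  · intro h d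
    have := (tendsto_pi_nhds.mp h) d
    rwa [nhds_discrete, tendsto_pure] at this
  · intro h
    apply tendsto_pi_nhds.mpr
    intro d
    rw [nhds_discrete, tendsto_pure]
    exact h d

instance : T2Space S3 := by
  letI : TopologicalSpace ℚ := ⊥
  haveI : DiscreteTopology ℚ := ⟨rfl⟩
  exact Pi.t2Space

theorem eqm_prod_subset {m : ℕ} (f : ℕ → S3) (n : ℕ)
    (hf : ∀ i, n ≤ i → Eqm m (f i) 1) {s : Finset ℕ} (hs : Finset.range n ⊆ s) :
    Eqm m (∏ i ∈ s, f i) (∏ i ∈ Finset.range n, f i) := by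
  rw [← Finset.prod_sdiff hs]
  have h1 : Eqm m (∏ i ∈ s \ Finset.range n, f i) 1 := by
    have := Eqm.prod (m := m) (s \ Finset.range n) f (fun _ => 1) ?_
    · simpa using this
    · intro i hi
      simp only [Finset.mem_sdiff, Finset.mem_range, not_lt] at hi
      exact hf i hi.2
  have := h1.mul (Eqm.refl (P := ∏ i ∈ Finset.range n, f i))
  simpa using this

def limitOf (F : ℕ → S3) : S3 :=
  show (Fin 3 →₀ ℕ) → ℚ from fun d => cf d (F (d 2))

theorem cf_limitOf (F : ℕ → S3) (d) : cf d (limitOf F) = cf d (F (d 2)) := rfl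

theorem hasProd_limit (f : ℕ → S3) (hf : ∀ m i, m ≤ i → Eqm m (f i) 1) :
    HasProd f (limitOf (fun n => ∏ i ∈ Finset.range n, f i)) := by
  rw [HasProd, tendsto_iff_coeff]
  intro d
  filter_upwards [Filter.eventually_ge_atTop (Finset.range (d 2))] with s hs
  rw [cf_limitOf]
  exact eqm_prod_subset f (d 2) (fun i hi => hf (d 2) i hi) hs d le_rfl

theorem eqm_limitOf_prod (f : ℕ → S3) (hf : ∀ m i, m ≤ i → Eqm m (f i) 1) (m : ℕ) :
    Eqm m (limitOf (fun n => ∏ i ∈ Finset.range n, f i)) (∏ i ∈ Finset.range m, f i) := by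
  intro d hd
  rw [cf_limitOf]
  have h1 := eqm_prod_subset f (d 2) (fun i hi => hf (d 2) i hi)
    (s := Finset.range m) (Finset.range_subset_range.mpr hd) d le_rfl
  exact h1.symm

theorem hasSum_of_stable {ι} (f : ι → S3) (g : S3) (T : (Fin 3 →₀ ℕ) → Finset ι)
    (h : ∀ d, ∀ s : Finset ι, T d ⊆ s → cf d (∑ i ∈ s, f i) = cf d g) : HasSum f g := by
  rw [HasSum, tendsto_iff_coeff]
  intro d
  filter_upwards [Filter.eventually_ge_atTop (T d)] with s hs
  exact h d s hs

-- the factors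
def fA (k : ℕ) (i : ℕ) : S3 := 1 + (X 0 : S3) * (X 1 : S3) ^ k * (X 2 : S3) ^ (k * (i + 1))
def fB (i : ℕ) : S3 := 1 - (X 1 : S3) * (X 2 : S3) ^ (i + 1)

def eA (k i : ℕ) : Fin 3 →₀ ℕ :=
  Finsupp.single 0 1 + Finsupp.single 1 k + Finsupp.single 2 (k * (i + 1))

theorem xmon (k i : ℕ) :
    (X 0 : S3) * (X 1 : S3) ^ k * (X 2 : S3) ^ (k * (i + 1)) = monomial (eA k i) 1 := by
  rw [show (X 0 : S3) = (X 0 : S3) ^ 1 from (pow_one _).symm, X_pow, X_pow, X_pow,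
    monomial_mul_monomial, monomial_mul_monomial, eA]
  norm_num

theorem fA_eqm_one (k : ℕ) (hk : 0 < k) (m i : ℕ) (h : m ≤ i) : Eqm m (fA k i) 1 := by
  rw [fA, xmon]
  apply eqm_one_add
  have : eA k i 2 = k * (i + 1) := by simp [eA, Finsupp.single_apply]
  rw [this]
  calc m ≤ i := h
  _ < i + 1 := Nat.lt_succ_self i
  _ ≤ k * (i + 1) := Nat.le_mul_of_pos_left _ hk

theorem fB_eqm_one (m i : ℕ) (h : m ≤ i) : Eqm m (fB i) 1 := by
  rw [fB, show (X 1 : S3) * (X 2 : S3) ^ (i+1) = monomial (Finsupp.single 1 1 + Finsupp.single 2 (i+1)) 1 by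
    rw [show (X 1 : S3) = (X 1 : S3) ^ 1 from (pow_one _).symm, X_pow, X_pow, monomial_mul_monomial]; norm_num,
    sub_eq_add_neg, ← map_neg]
  apply eqm_one_add
  simp [Finsupp.single_apply]
  omega

-- finiteness of k-partitions of bounded weight
theorem card_le_wt (π : Multiset (ℕ × Bool)) (h : ∀ p ∈ π, 0 < p.1) :
    Multiset.card π ≤ wt π := by
  induction π using Multiset.induction with
  | empty => simp [wt]
  | cons a s ih =>
    rw [wt, Multiset.map_cons, Multiset.sum_cons, Multiset.card_cons]
    have h1 : 0 < a.1 := h a (Multiset.mem_cons_self a s)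
    have h2 := ih (fun p hp => h p (Multiset.mem_cons_of_mem hp))
    rw [wt] at h2
    omega

theorem finite_bounded (m : ℕ) :
    Set.Finite {π : Multiset (ℕ × Bool) | (∀ p ∈ π, 0 < p.1) ∧ wt π ≤ m} := by
  classical
  set M : Multiset (ℕ × Bool) := m • (Finset.range (m+1) ×ˢ (Finset.univ : Finset Bool)).val with hM
  apply Set.Finite.subset (M.powerset.toFinset : Finset (Multiset (ℕ × Bool))).finite_toSet
  intro π hπ
  obtain ⟨hπ1, hπ2⟩ := hπ
  rw [Finset.mem_coe, Multiset.mem_toFinset, Multiset.mem_powerset, Multiset.le_iff_count]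
  intro e
  by_cases he : e ∈ π
  · have h1 : Multiset.count e π ≤ Multiset.card π := Multiset.count_le_card e π
    have h2 : Multiset.card π ≤ m := le_trans (card_le_wt π hπ1) hπ2
    have h3 : e.1 ≤ m := by
      have : e.1 ≤ wt π := by
        rw [wt]
        exact Multiset.le_sum_of_mem (Multiset.mem_map_of_mem _ he)
      omega
    have h4 : e ∈ (Finset.range (m+1) ×ˢ (Finset.univ : Finset Bool)).val := by
      rw [Finset.mem_val, Finset.mem_product, Finset.mem_range]
      exact ⟨by omega, Finset.mem_univ _⟩
    rw [hM, Multiset.count_nsmul]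
    have h5 : 1 ≤ Multiset.count e (Finset.range (m+1) ×ˢ (Finset.univ : Finset Bool)).val :=
      Multiset.one_le_count_iff_mem.mpr h4
    calc Multiset.count e π ≤ m := by omega
    _ ≤ m * Multiset.count e _ := Nat.le_mul_of_pos_right _ (by omega)
  · simp [Multiset.count_eq_zero_of_notMem he]

theorem finite_sub (k m : ℕ) :
    Set.Finite {π : {π : Multiset (ℕ × Bool) // IsKPart k π} | wt π.1 ≤ m} := by
  have h := Set.Finite.preimage (f := fun π : {π : Multiset (ℕ × Bool) // IsKPart k π} => π.1)
    (fun a _ b _ h => Subtype.val_injective h) (finite_bounded m)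
  exact h.subset (fun π hπ => ⟨π.2.1, hπ⟩)

def Fm (k m : ℕ) : Finset {π : Multiset (ℕ × Bool) // IsKPart k π} := (finite_sub k m).toFinset

theorem mem_Fm {k m π} : π ∈ Fm k m ↔ wt π.1 ≤ m := by
  simp [Fm, Set.Finite.mem_toFinset]

def Sig (k m : ℕ) : S3 := ∑ π ∈ Fm k m, mono π.1

theorem cf_sum_stable (k : ℕ) (d : Fin 3 →₀ ℕ) (s : Finset {π : Multiset (ℕ × Bool) // IsKPart k π})
    (hs : Fm k (d 2) ⊆ s) : cf d (∑ π ∈ s, mono π.1) = cf d (Sig k (d 2)) := by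
  rw [Sig, cf, cf, map_sum, map_sum]
  apply (Finset.sum_subset hs ?_).symm
  intro π _ hπ
  rw [mem_Fm, not_le] at hπ
  exact eqm_mono_zero (m := d 2) hπ d le_rfl

theorem hasSum_kpart (k : ℕ) :
    HasSum (fun π : {π : Multiset (ℕ × Bool) // IsKPart k π} => mono π.1)
      (limitOf (Sig k)) := by
  apply hasSum_of_stable _ _ (fun d => Fm k (d 2))
  intro d s hs
  rw [cf_limitOf]
  exact cf_sum_stable k d s hs

theorem eqm_limit_Sig (k m : ℕ) : Eqm m (limitOf (Sig k)) (Sig k m) := by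
  intro d hd
  rw [cf_limitOf]
  refine (cf_sum_stable k d (Fm k m) ?_).symm
  intro π hπ
  rw [mem_Fm] at *
  omega


-- building blocks for the core identity
def blk (k a j : ℕ) (b : Bool) : Multiset (ℕ × Bool) :=
  if b then Multiset.replicate (k-1+j) (a, false) + {(a, true)} else Multiset.replicate j (a, false)

theorem count_blk_false (k a a' j : ℕ) (b : Bool) :
    Multiset.count (a, false) (blk k a' j b) =
      if a' = a then (if b then k-1+j else j) else 0 := by
  by_cases h : a' = a
  · subst h
    cases b
    · rw [blk, if_neg (by simp), Multiset.count_replicate, if_pos rfl, if_pos rfl, if_neg (by simp)]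
    · rw [blk, if_pos rfl, Multiset.count_add, Multiset.count_replicate, if_pos rfl,
        Multiset.count_singleton, if_neg (by simp), if_pos rfl, if_pos rfl]
      omega
  · have hne : ((a', false) : ℕ × Bool) ≠ (a, false) := by simp [h]
    have hne2 : ((a, false) : ℕ × Bool) ≠ (a', true) := by simp
    cases b
    · rw [blk, if_neg (by simp), Multiset.count_replicate, if_neg hne, if_neg h]
    · rw [blk, if_pos rfl, Multiset.count_add, Multiset.count_replicate, if_neg hne,
        Multiset.count_singleton, if_neg hne2, if_neg h]

theorem count_blk_true (k a a' j : ℕ) (b : Bool) :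
    Multiset.count (a, true) (blk k a' j b) =
      if a' = a ∧ b = true then 1 else 0 := by
  have hne : ((a', false) : ℕ × Bool) ≠ (a, true) := by simp
  cases b
  · rw [blk, if_neg (by simp), Multiset.count_replicate, if_neg hne,
      if_neg (by rintro ⟨-, h⟩; exact absurd h (by simp))]
  · rw [blk, if_pos rfl, Multiset.count_add, Multiset.count_replicate, if_neg hne,
      Multiset.count_singleton]
    by_cases h : a' = a
    · subst h
      rw [if_pos rfl, if_pos ⟨rfl, rfl⟩]
    · rw [if_neg (by simp [Ne.symm h]), if_neg (by rintro ⟨h1, -⟩; exact h h1)]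

theorem mem_blk {k a j b q} (hq : q ∈ blk k a j b) : q.1 = a := by
  cases b
  · rw [blk, if_neg (by simp), Multiset.mem_replicate] at hq
    rw [hq.2]
  · rw [blk, if_pos rfl, Multiset.mem_add] at hq
    rcases hq with h | h
    · rw [Multiset.mem_replicate] at h
      rw [h.2]
    · rw [Multiset.mem_singleton] at h
      rw [h]

theorem olCount_replicate (j a : ℕ) : olCount (Multiset.replicate j (a, false)) = 0 := by
  simp [olCount, Multiset.filter_eq_nil, Multiset.mem_replicate]

theorem wt_replicate (j a : ℕ) : wt (Multiset.replicate j (a, false)) = j * a := by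
  simp [wt, Multiset.map_replicate, Multiset.sum_replicate]

theorem stats_eq (π : Multiset (ℕ × Bool)) {o l n : ℕ} (ho : olCount π = o)
    (hl : Multiset.card π = l) (hn : wt π = n) :
    stats π = Finsupp.single 0 o + Finsupp.single 1 l + Finsupp.single 2 n := by
  rw [stats, ho, hl, hn]

theorem w_pow (a j : ℕ) : ((X 1 : S3) * (X 2 : S3) ^ a) ^ j =
    monomial (Finsupp.single 1 j + Finsupp.single 2 (a * j)) 1 := by
  rw [mul_pow, ← pow_mul, X_pow, X_pow, monomial_mul_monomial, one_mul]

theorem mono_blk_false (k a j : ℕ) :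
    mono (blk k a j false) = ((X 1 : S3) * (X 2 : S3) ^ a) ^ j := by
  rw [w_pow, mono, stats_eq (blk k a j false) (o := 0) (l := j) (n := j * a)]
  · rw [Finsupp.single_zero, zero_add, Nat.mul_comm]
  · exact olCount_replicate j a
  · simp [blk]
  · simp [blk, wt_replicate]

theorem xmon' (k a : ℕ) :
    (X 0 : S3) * (X 1 : S3) ^ k * (X 2 : S3) ^ (k * a) =
      monomial (Finsupp.single 0 1 + Finsupp.single 1 k + Finsupp.single 2 (k * a)) 1 := by
  rw [show (X 0 : S3) = (X 0 : S3) ^ 1 from (pow_one _).symm, X_pow, X_pow, X_pow,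
    monomial_mul_monomial, monomial_mul_monomial]
  norm_num

theorem wt_blk_true (k a j : ℕ) (hk : 0 < k) : wt (blk k a j true) = a * (k + j) := by
  rw [blk, if_pos rfl, wt_add, wt_replicate]
  have h1 : wt {(a, true)} = a := by simp [wt]
  rw [h1]
  have h2 : k - 1 + j + 1 = k + j := by omega
  calc (k - 1 + j) * a + a = (k - 1 + j + 1) * a := by ring
  _ = (k + j) * a := by rw [h2]
  _ = a * (k + j) := mul_comm _ _

theorem olCount_blk_true (k a j : ℕ) : olCount (blk k a j true) = 1 := by
  rw [blk, if_pos rfl, olCount_add, olCount_replicate]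
  simp [olCount, Multiset.filter_singleton]

theorem card_blk_true (k a j : ℕ) (hk : 0 < k) : Multiset.card (blk k a j true) = k + j := by
  rw [blk, if_pos rfl, Multiset.card_add, Multiset.card_replicate, Multiset.card_singleton]
  omega

theorem mono_blk_true (k a j : ℕ) (hk : 0 < k) :
    mono (blk k a j true) =
      (X 0 : S3) * (X 1 : S3) ^ k * (X 2 : S3) ^ (k * a) * ((X 1 : S3) * (X 2 : S3) ^ a) ^ j := by
  rw [w_pow, xmon' k a, monomial_mul_monomial, one_mul, mono,
    stats_eq (blk k a j true) (o := 1) (l := k + j) (n := a * (k + j))]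
  · congr 1
    have h0 : (Finsupp.single 0 1 + Finsupp.single 1 k + Finsupp.single 2 (k * a))
        + (Finsupp.single 1 j + Finsupp.single 2 (a * j))
        = (Finsupp.single 0 1 : Fin 3 →₀ ℕ) + (Finsupp.single 1 k + Finsupp.single 1 j)
          + (Finsupp.single 2 (k * a) + Finsupp.single 2 (a * j)) := by abel
    have e2 : k * a + a * j = a * (k + j) := by ring
    rw [h0, ← Finsupp.single_add, ← Finsupp.single_add, e2]
  · exact olCount_blk_true k a j
  · exact card_blk_true k a j hk
  · exact wt_blk_true k a j hk

section CoreSec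
variable (k m : ℕ)

def Cset : Finset (ℕ × Bool) := Finset.range (m+1) ×ˢ (Finset.univ : Finset Bool)

def Sval (a : ℕ) : S3 := ∑ c ∈ Cset m, mono (blk k a c.1 c.2)

theorem Sval_eq (a : ℕ) (hk : 0 < k) :
    Sval k m a = (∑ j ∈ Finset.range (m+1), ((X 1 : S3) * (X 2 : S3) ^ a) ^ j) *
      (1 + (X 0 : S3) * (X 1 : S3) ^ k * (X 2 : S3) ^ (k * a)) := by
  rw [Sval, Cset, Finset.sum_product]
  simp only [Fintype.sum_bool, mono_blk_true k a _ hk, mono_blk_false]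
  rw [Finset.sum_add_distrib, ← Finset.mul_sum]
  ring

theorem geom_eqm (i : ℕ) :
    Eqm m ((∑ j ∈ Finset.range (m+1), ((X 1 : S3) * (X 2 : S3) ^ (i+1)) ^ j) * fB i) 1 := by
  have hg : (∑ j ∈ Finset.range (m+1), ((X 1 : S3) * (X 2 : S3) ^ (i+1)) ^ j) * fB i =
      1 - ((X 1 : S3) * (X 2 : S3) ^ (i+1)) ^ (m+1) := by
    have := geom_sum_mul ((X 1 : S3) * (X 2 : S3) ^ (i+1)) (m+1)
    rw [fB]
    have h2 : (1 : S3) - (X 1 : S3) * (X 2 : S3) ^ (i+1) =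
        -(((X 1 : S3) * (X 2 : S3) ^ (i+1)) - 1) := by ring
    rw [h2, mul_neg, this]
    ring
  rw [hg, w_pow, sub_eq_add_neg, ← map_neg]
  apply eqm_one_add
  have h2 : ((Finsupp.single 1 (m+1) + Finsupp.single 2 ((i+1)*(m+1))) : Fin 3 →₀ ℕ) 2 =
      (i+1)*(m+1) := by
    rw [Finsupp.add_apply, Finsupp.single_apply, Finsupp.single_apply, if_neg (by decide),
      if_pos rfl, zero_add]
  rw [h2]
  nlinarith

theorem SB_eqm (i : ℕ) (hk : 0 < k) : Eqm m (Sval k m (i+1) * fB i) (fA k i) := by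
  rw [Sval_eq k m (i+1) hk]
  have h1 : (∑ j ∈ Finset.range (m+1), ((X 1 : S3) * (X 2 : S3) ^ (i+1)) ^ j) *
      (1 + (X 0 : S3) * (X 1 : S3) ^ k * (X 2 : S3) ^ (k * (i+1))) * fB i =
      ((∑ j ∈ Finset.range (m+1), ((X 1 : S3) * (X 2 : S3) ^ (i+1)) ^ j) * fB i) *
      (1 + (X 0 : S3) * (X 1 : S3) ^ k * (X 2 : S3) ^ (k * (i+1))) := by ring
  rw [h1]
  have h2 := (geom_eqm m i).mul (Eqm.refl (m := m)
    (P := 1 + (X 0 : S3) * (X 1 : S3) ^ k * (X 2 : S3) ^ (k * (i+1))))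
  rw [one_mul] at h2
  exact h2

-- the assembled multiset of a choice function
def Mp (p : (a : ℕ) → a ∈ Finset.range m → ℕ × Bool) : Multiset (ℕ × Bool) :=
  ∑ x ∈ (Finset.range m).attach, blk k (x.1+1) (p x.1 x.2).1 (p x.1 x.2).2

theorem mono_sum {ι} (s : Finset ι) (g : ι → Multiset (ℕ × Bool)) :
    mono (∑ x ∈ s, g x) = ∏ x ∈ s, mono (g x) := by
  classical
  induction s using Finset.induction with
  | empty => simpa using mono_zero
  | @insert a s' hx ih =>
    rw [Finset.sum_insert hx, Finset.prod_insert hx, mono_add, ih]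

theorem count_Mp_true (p) (a : ℕ) (ha : a ∈ Finset.range m) :
    Multiset.count (a+1, true) (Mp k m p) = if (p a ha).2 then 1 else 0 := by
  rw [Mp, Multiset.count_sum']
  rw [Finset.sum_eq_single (⟨a, ha⟩ : {x // x ∈ Finset.range m})]
  · rw [count_blk_true]
    by_cases h : (p a ha).2 <;> simp [h]
  · intro x _ hx
    rw [count_blk_true, if_neg]
    rintro ⟨h1, -⟩
    exact hx (Subtype.ext (show x.1 = a by omega))
  · intro h
    exact absurd (Finset.mem_attach _ _) h

theorem count_Mp_false (p) (a : ℕ) (ha : a ∈ Finset.range m) :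
    Multiset.count (a+1, false) (Mp k m p) =
      if (p a ha).2 then k-1+(p a ha).1 else (p a ha).1 := by
  rw [Mp, Multiset.count_sum']
  rw [Finset.sum_eq_single (⟨a, ha⟩ : {x // x ∈ Finset.range m})]
  · rw [count_blk_false, if_pos rfl]
  · intro x _ hx
    rw [count_blk_false, if_neg]
    intro h1
    exact hx (Subtype.ext (show x.1 = a by omega))
  · intro h
    exact absurd (Finset.mem_attach _ _) h

theorem count_Mp_out (p) (v : ℕ) (b : Bool) (hv : v = 0 ∨ m < v) :
    Multiset.count (v, b) (Mp k m p) = 0 := by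
  rw [Mp, Multiset.count_sum']
  apply Finset.sum_eq_zero
  intro x _
  have hx : x.1 < m := Finset.mem_range.mp x.2
  cases b
  · rw [count_blk_false, if_neg (by omega)]
  · rw [count_blk_true, if_neg (by rintro ⟨h1, -⟩; omega)]

theorem isKPart_Mp (hk : 0 < k) (p) : IsKPart k (Mp k m p) := by
  constructor
  · intro q hq
    rw [Mp, Multiset.mem_sum] at hq
    obtain ⟨x, -, hx⟩ := hq
    have := mem_blk hx
    omega
  · intro a
    rcases Nat.eq_zero_or_pos a with rfl | ha0
    · rw [count_Mp_out k m p 0 true (Or.inl rfl)]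
      simp
    rcases le_or_gt a m with ham | ham
    · obtain ⟨a', rfl⟩ : ∃ a', a = a' + 1 := ⟨a - 1, by omega⟩
      have ha' : a' ∈ Finset.range m := Finset.mem_range.mpr (by omega)
      rw [count_Mp_true k m p a' ha', count_Mp_false k m p a' ha']
      by_cases h : (p a' ha').2 <;> simp [h] <;> try omega
    · rw [count_Mp_out k m p a true (Or.inr ham),
        count_Mp_out k m p a false (Or.inr ham)]
      simp

def PsiF (π : Multiset (ℕ × Bool)) : (a : ℕ) → a ∈ Finset.range m → ℕ × Bool :=
  fun a _ => if π.count (a+1, true) = 1 then (π.count (a+1, false) - (k-1), true)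
    else (π.count (a+1, false), false)

theorem Mp_PsiF (hk : 0 < k) (π : Multiset (ℕ × Bool)) (hπ : IsKPart k π) (hw : wt π ≤ m) :
    Mp k m (PsiF k m π) = π := by
  ext q
  obtain ⟨v, b⟩ := q
  have hpos := hπ.1
  rcases Nat.eq_zero_or_pos v with rfl | hv0
  · rw [count_Mp_out k m _ 0 b (Or.inl rfl)]
    symm
    rw [Multiset.count_eq_zero]
    intro hmem
    exact absurd (hpos _ hmem) (by simp)
  rcases le_or_gt v m with hvm | hvm
  · obtain ⟨a, rfl⟩ : ∃ a, v = a + 1 := ⟨v - 1, by omega⟩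
    have ha : a ∈ Finset.range m := Finset.mem_range.mpr (by omega)
    have hct := (hπ.2 (a+1)).1
    have hck := (hπ.2 (a+1)).2
    cases b
    · rw [count_Mp_false k m _ a ha]
      by_cases h : π.count (a+1, true) = 1
      · have hge := hck h
        simp [PsiF, h]
        omega
      · simp [PsiF, h]
    · rw [count_Mp_true k m _ a ha]
      by_cases h : π.count (a+1, true) = 1
      · simp [PsiF, h]
      · simp [PsiF, h]
        omega
  · rw [count_Mp_out k m _ v b (Or.inr hvm)]
    symm
    rw [Multiset.count_eq_zero]
    intro hmem
    have : v ≤ wt π := by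
      rw [wt]
      exact Multiset.le_sum_of_mem (Multiset.mem_map_of_mem Prod.fst hmem)
    omega

theorem PsiF_Mp (hk : 0 < k) (p) : PsiF k m (Mp k m p) = p := by
  funext a ha
  rw [PsiF]
  have h1 := count_Mp_true k m p a ha
  have h2 := count_Mp_false k m p a ha
  by_cases h : (p a ha).2
  · rw [if_pos (by rw [h1, if_pos h])]
    rw [h2, if_pos h]
    have : k - 1 + (p a ha).1 - (k - 1) = (p a ha).1 := by omega
    rw [this]
    exact Prod.ext rfl (by rw [h])
  · rw [if_neg (by rw [h1, if_neg h]; omega)]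
    rw [h2, if_neg h]
    exact Prod.ext rfl (by simp [h])

theorem prod_Sval (hk : 0 < k) :
    ∏ i ∈ Finset.range m, Sval k m (i+1) =
      ∑ p ∈ (Finset.range m).pi (fun _ => Cset m), mono (Mp k m p) := by
  simp only [Sval]
  rw [Finset.prod_sum]
  apply Finset.sum_congr rfl
  intro p _
  rw [Mp, mono_sum]

theorem eqm_prodSval_Sig (hk : 0 < k) :
    Eqm m (∏ i ∈ Finset.range m, Sval k m (i+1)) (Sig k m) := by
  classical
  rw [prod_Sval k m hk]
  set piF := (Finset.range m).pi (fun _ => Cset m) with hpiF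
  have hsplit := Finset.sum_filter_add_sum_filter_not piF (fun p => wt (Mp k m p) ≤ m)
    (fun p => mono (Mp k m p))
  rw [← hsplit]
  have hbad : Eqm m (∑ p ∈ piF.filter (fun p => ¬ wt (Mp k m p) ≤ m), mono (Mp k m p)) 0 := by
    have := Eqm.sum (m := m) (piF.filter (fun p => ¬ wt (Mp k m p) ≤ m))
      (fun p => mono (Mp k m p)) (fun _ => 0) ?_
    · simpa using this
    · intro p hp
      rw [Finset.mem_filter] at hp
      exact eqm_mono_zero (by omega)
  have hgood : (∑ p ∈ piF.filter (fun p => wt (Mp k m p) ≤ m), mono (Mp k m p)) = Sig k m := by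
    rw [Sig]
    refine Finset.sum_nbij'
      (i := fun p => (⟨Mp k m p, isKPart_Mp k m hk p⟩ : {π : Multiset (ℕ × Bool) // IsKPart k π}))
      (j := fun π => PsiF k m π.1) ?_ ?_ ?_ ?_ ?_
    · intro p hp
      rw [Finset.mem_filter] at hp
      rw [mem_Fm]
      exact hp.2
    · intro π hπ
      rw [mem_Fm] at hπ
      rw [Finset.mem_filter]
      constructor
      · rw [hpiF, Finset.mem_pi]
        intro a ha
        have hcard : π.1.count (a+1, false) ≤ m := by
          have h1 : π.1.count (a+1, false) ≤ Multiset.card π.1 := Multiset.count_le_card _ _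
          have h2 := card_le_wt π.1 π.2.1
          omega
        rw [Cset, Finset.mem_product]
        refine ⟨Finset.mem_range.mpr ?_, Finset.mem_univ _⟩
        by_cases h : π.1.count (a+1, true) = 1
        · simp [PsiF, h]
          omega
        · simp [PsiF, h]
          omega
      · rw [Mp_PsiF k m hk π.1 π.2 hπ]
        exact hπ
    · intro p _
      exact PsiF_Mp k m hk p
    · intro π hπ
      rw [mem_Fm] at hπ
      exact Subtype.ext (Mp_PsiF k m hk π.1 π.2 hπ)
    · intro p _
      rfl
  rw [hgood]
  have hfin := (Eqm.refl (m := m) (P := Sig k m)).add hbad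
  simpa using hfin

end CoreSec

-- THE CORE FINITE IDENTITY
theorem core (k : ℕ) (hk : 0 < k) (m : ℕ) :
    Eqm m (Sig k m * ∏ i ∈ Finset.range m, fB i) (∏ i ∈ Finset.range m, fA k i) := by
  have h1 := (eqm_prodSval_Sig k m hk).symm.mul
    (Eqm.refl (m := m) (P := ∏ i ∈ Finset.range m, fB i))
  have h2 : (∏ i ∈ Finset.range m, Sval k m (i+1)) * (∏ i ∈ Finset.range m, fB i)
      = ∏ i ∈ Finset.range m, (Sval k m (i+1) * fB i) := Finset.prod_mul_distrib.symm
  have h3 := Eqm.prod (m := m) (Finset.range m) (fun i => Sval k m (i+1) * fB i) (fA k)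
    (fun i _ => SB_eqm k m i hk)
  apply h1.trans
  rw [h2]
  exact h3

-- assembly
theorem key (k : ℕ) (hk : 0 < k) :
    limitOf (Sig k) * limitOf (fun n => ∏ i ∈ Finset.range n, fB i) =
      limitOf (fun n => ∏ i ∈ Finset.range n, fA k i) := by
  apply eq_of_forall_eqm
  intro m
  have h1 := (eqm_limit_Sig k m).mul (eqm_limitOf_prod fB fB_eqm_one m)
  exact (h1.trans (core k hk m)).trans (eqm_limitOf_prod (fA k) (fA_eqm_one k hk) m).symm

theorem constantCoeff_B :
    constantCoeff (limitOf (fun n => ∏ i ∈ Finset.range n, fB i)) = 1 := by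
  have : constantCoeff (limitOf (fun n => ∏ i ∈ Finset.range n, fB i)) =
      cf 0 (limitOf (fun n => ∏ i ∈ Finset.range n, fB i)) := by
    rw [cf, coeff_zero_eq_constantCoeff]
  rw [this, cf_limitOf]
  show cf 0 (∏ i ∈ Finset.range ((0 : Fin 3 →₀ ℕ) 2), fB i) = 1
  rw [show ((0 : Fin 3 →₀ ℕ) 2) = 0 from rfl, Finset.range_zero, Finset.prod_empty]
  exact MvPowerSeries.coeff_zero_one

theorem isUnit_B : IsUnit (limitOf (fun n => ∏ i ∈ Finset.range n, fB i)) := by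
  rw [MvPowerSeries.isUnit_iff_constantCoeff, constantCoeff_B]
  exact isUnit_one

end Stmt2

open MvPowerSeries in
/-- the generating function for k-partitions, with x = X 0 counting
overlined parts, z = X 1 counting parts and q = X 2 the weight, equals
(-x z^k q^k; q^k)_∞ / (zq; q)_∞. -/
theorem stmt2 (k : ℕ) (hk : 0 < k) :
    ∑' π : {π : Multiset (ℕ × Bool) // IsKPart k π},
        (X 0 : S3) ^ olCount π.1 * (X 1 : S3) ^ Multiset.card π.1 * (X 2 : S3) ^ wt π.1 =
      (∏' i : ℕ, (1 + (X 0 : S3) * (X 1 : S3) ^ k * (X 2 : S3) ^ (k * (i + 1)))) *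
        Ring.inverse (∏' i : ℕ, (1 - (X 1 : S3) * (X 2 : S3) ^ (i + 1))) := by
  classical
  have hA := Stmt2.hasProd_limit (Stmt2.fA k) (fun m i h => Stmt2.fA_eqm_one k hk m i h)
  have hB := Stmt2.hasProd_limit Stmt2.fB (fun m i h => Stmt2.fB_eqm_one m i h)
  have hS := Stmt2.hasSum_kpart k
  have eA : (∏' i : ℕ, (1 + (X 0 : S3) * (X 1 : S3) ^ k * (X 2 : S3) ^ (k * (i + 1)))) =
      Stmt2.limitOf (fun n => ∏ i ∈ Finset.range n, Stmt2.fA k i) := hA.tprod_eq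
  have eB : (∏' i : ℕ, (1 - (X 1 : S3) * (X 2 : S3) ^ (i + 1))) =
      Stmt2.limitOf (fun n => ∏ i ∈ Finset.range n, Stmt2.fB i) := hB.tprod_eq
  have eS : ∑' π : {π : Multiset (ℕ × Bool) // IsKPart k π},
        (X 0 : S3) ^ olCount π.1 * (X 1 : S3) ^ Multiset.card π.1 * (X 2 : S3) ^ wt π.1 =
      Stmt2.limitOf (Stmt2.Sig k) := by
    rw [show (fun π : {π : Multiset (ℕ × Bool) // IsKPart k π} =>
        (X 0 : S3) ^ olCount π.1 * (X 1 : S3) ^ Multiset.card π.1 * (X 2 : S3) ^ wt π.1) =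
        fun π => Stmt2.mono π.1 from funext fun π => (Stmt2.mono_eq π.1).symm]
    exact hS.tsum_eq
  rw [eA, eB, eS]
  have hkey := Stmt2.key k hk
  have hu := Stmt2.isUnit_B
  calc Stmt2.limitOf (Stmt2.Sig k)
      = Stmt2.limitOf (Stmt2.Sig k) *
        (Stmt2.limitOf (fun n => ∏ i ∈ Finset.range n, Stmt2.fB i) *
          Ring.inverse (Stmt2.limitOf (fun n => ∏ i ∈ Finset.range n, Stmt2.fB i))) := by
        rw [Ring.mul_inverse_cancel _ hu, mul_one]
    _ = Stmt2.limitOf (fun n => ∏ i ∈ Finset.range n, Stmt2.fA k i) *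
        Ring.inverse (Stmt2.limitOf (fun n => ∏ i ∈ Finset.range n, Stmt2.fB i)) := by
        rw [← mul_assoc, hkey]
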